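/- Local a priori error bound for WST-LSPG (Theorem 4.5): retaining the window-residual setup, suppose u ∈ V and u₀ ∈ E satisfy R u u₀ = 0 (the full-order-model trajectory over the window). Let S ⊆ V be the (affine) space–time trial set, let W be a submodule of E, and let ũ ∈ V and ũ₀ ∈ W be the WST-LSPG approximate trajectory and its window initial condition, satisfying the residual-minimization (optimality) property that for every w ∈ S, ‖R ũ ũ₀‖ ≤ ‖R w ũ₀‖. Let û ∈ S be a point of S closest to u in the ℓ² norm, and let û₀ be the orthogonal projection of u₀ onto W. Then ‖ũ - u‖ ≤ (1 / c₁) * ‖R û û₀‖ + (2 * c₂ / c₁) * ‖ũ₀ - u₀‖. -/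

import Mathlib

/-- Local a priori error bound for WST-LSPG (Theorem 4.5). -/
theorem local_a_priori_error_bound
    (M N : ℕ)
    (A B : EuclideanSpace ℝ (Fin M) →L[ℝ] EuclideanSpace ℝ (Fin M))
    (Aic Bic : EuclideanSpace ℝ (Fin N) →L[ℝ] EuclideanSpace ℝ (Fin M))
    (Δt : ℝ) (hΔt : 0 < Δt)
    (F : EuclideanSpace ℝ (Fin M) → EuclideanSpace ℝ (Fin M))
    (f₀ : EuclideanSpace ℝ (Fin N) → EuclideanSpace ℝ (Fin N))
    (κ : ℝ) (hκ : 0 ≤ κ)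
    (hF : ∀ x y, ‖F x - F y‖ ≤ κ * ‖x - y‖)
    (hf₀ : ∀ x y, ‖f₀ x - f₀ y‖ ≤ κ * ‖x - y‖)
    (σA σB σAic σBic : ℝ)
    (hσA : 0 < σA) (hA : ∀ x, σA * ‖x‖ ≤ ‖A x‖)
    (hσB : 0 ≤ σB) (hB : ∀ x, ‖B x‖ ≤ σB * ‖x‖)
    (hσAic : 0 ≤ σAic) (hAic : ∀ x, ‖Aic x‖ ≤ σAic * ‖x‖)
    (hσBic : 0 ≤ σBic) (hBic : ∀ x, ‖Bic x‖ ≤ σBic * ‖x‖)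
    (R : EuclideanSpace ℝ (Fin M) → EuclideanSpace ℝ (Fin N) → EuclideanSpace ℝ (Fin M))
    (hR : ∀ w w₀, R w w₀ = A w - Δt • B (F w) + Aic w₀ - Δt • Bic (f₀ w₀))
    (c₁ c₂ : ℝ)
    (hc₁ : c₁ = σA - σB * Δt * κ) (hc₂ : c₂ = σAic + Δt * κ * σBic)
    (hc₁pos : 0 < c₁)
    (u : EuclideanSpace ℝ (Fin M)) (u₀ : EuclideanSpace ℝ (Fin N))
    (hFOM : R u u₀ = 0)
    (S : Set (EuclideanSpace ℝ (Fin M))) (W : Submodule ℝ (EuclideanSpace ℝ (Fin N)))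
    (uR : EuclideanSpace ℝ (Fin M)) (uR₀ : EuclideanSpace ℝ (Fin N)) (huR₀ : uR₀ ∈ W)
    (hopt : ∀ w ∈ S, ‖R uR uR₀‖ ≤ ‖R w uR₀‖)
    (uP : EuclideanSpace ℝ (Fin M)) (huPS : uP ∈ S)
    (huPclosest : ∀ w ∈ S, ‖u - uP‖ ≤ ‖u - w‖)
    (uP₀ : EuclideanSpace ℝ (Fin N)) (huP₀ : uP₀ = (W.orthogonalProjection u₀ : EuclideanSpace ℝ (Fin N))) :
    ‖uR - u‖ ≤ (1 / c₁) * ‖R uP uP₀‖ + (2 * c₂ / c₁) * ‖uR₀ - u₀‖ := by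
  have hc₂nn : 0 ≤ c₂ := by
    rw [hc₂]; positivity
  -- generic bound on IC perturbation
  have hic : ∀ w (a b : EuclideanSpace ℝ (Fin N)),
      ‖R w a - R w b‖ ≤ c₂ * ‖a - b‖ := by
    intro w a b
    have hdiff : R w a - R w b = Aic (a - b) - Δt • Bic (f₀ a - f₀ b) := by
      rw [hR, hR, map_sub, map_sub, smul_sub]
      abel
    rw [hdiff, hc₂]
    calc ‖Aic (a - b) - Δt • Bic (f₀ a - f₀ b)‖
        ≤ ‖Aic (a - b)‖ + ‖Δt • Bic (f₀ a - f₀ b)‖ := norm_sub_le _ _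
      _ ≤ σAic * ‖a - b‖ + Δt * (σBic * (κ * ‖a - b‖)) := by
          rw [norm_smul, Real.norm_of_nonneg hΔt.le]
          gcongr
          · exact hAic _
          · calc ‖Bic (f₀ a - f₀ b)‖ ≤ σBic * ‖f₀ a - f₀ b‖ := hBic _
              _ ≤ σBic * (κ * ‖a - b‖) := by gcongr; exact hf₀ a b
      _ = (σAic + Δt * κ * σBic) * ‖a - b‖ := by ring
  -- lower bound at the ROM solution
  have key : c₁ * ‖uR - u‖ ≤ ‖R uR uR₀‖ + c₂ * ‖uR₀ - u₀‖ := by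
    have hAexp : A (uR - u) = (R uR uR₀ - R u u₀) + Δt • (B (F uR - F u))
        - Aic (uR₀ - u₀) + Δt • (Bic (f₀ uR₀ - f₀ u₀)) := by
      rw [hR, hR, map_sub, map_sub, map_sub, map_sub, smul_sub, smul_sub]
      abel
    have h1 : σA * ‖uR - u‖ ≤ ‖A (uR - u)‖ := hA _
    have h2 : ‖A (uR - u)‖ ≤ ‖R uR uR₀‖ + Δt * (σB * (κ * ‖uR - u‖))
        + σAic * ‖uR₀ - u₀‖ + Δt * (σBic * (κ * ‖uR₀ - u₀‖)) := by
      rw [hAexp]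
      calc ‖(R uR uR₀ - R u u₀) + Δt • (B (F uR - F u))
            - Aic (uR₀ - u₀) + Δt • (Bic (f₀ uR₀ - f₀ u₀))‖
          ≤ ‖(R uR uR₀ - R u u₀) + Δt • (B (F uR - F u)) - Aic (uR₀ - u₀)‖
            + ‖Δt • (Bic (f₀ uR₀ - f₀ u₀))‖ := norm_add_le _ _
        _ ≤ (‖(R uR uR₀ - R u u₀) + Δt • (B (F uR - F u))‖ + ‖Aic (uR₀ - u₀)‖)
            + ‖Δt • (Bic (f₀ uR₀ - f₀ u₀))‖ := by gcongr; exact norm_sub_le _ _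
        _ ≤ ((‖R uR uR₀ - R u u₀‖ + ‖Δt • (B (F uR - F u))‖) + ‖Aic (uR₀ - u₀)‖)
            + ‖Δt • (Bic (f₀ uR₀ - f₀ u₀))‖ := by gcongr; exact norm_add_le _ _
        _ ≤ ‖R uR uR₀‖ + Δt * (σB * (κ * ‖uR - u‖))
            + σAic * ‖uR₀ - u₀‖ + Δt * (σBic * (κ * ‖uR₀ - u₀‖)) := by
            rw [hFOM, sub_zero, norm_smul, norm_smul, Real.norm_of_nonneg hΔt.le]
            gcongr ?_ + ?_ + ?_ + ?_
            · exact le_refl _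
            · refine mul_le_mul_of_nonneg_left ?_ hΔt.le
              calc ‖B (F uR - F u)‖ ≤ σB * ‖F uR - F u‖ := hB _
                _ ≤ σB * (κ * ‖uR - u‖) := by gcongr; exact hF _ _
            · exact hAic _
            · refine mul_le_mul_of_nonneg_left ?_ hΔt.le
              calc ‖Bic (f₀ uR₀ - f₀ u₀)‖ ≤ σBic * ‖f₀ uR₀ - f₀ u₀‖ := hBic _
                _ ≤ σBic * (κ * ‖uR₀ - u₀‖) := by gcongr; exact hf₀ _ _
    rw [hc₁, hc₂]
    nlinarith [h1.trans h2]
  -- optimality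
  have hopt' : ‖R uR uR₀‖ ≤ ‖R uP uR₀‖ := hopt uP huPS
  -- compare IC
  have hsplit : ‖R uP uR₀‖ ≤ ‖R uP uP₀‖ + c₂ * ‖uR₀ - uP₀‖ := by
    calc ‖R uP uR₀‖ ≤ ‖R uP uP₀‖ + ‖R uP uR₀ - R uP uP₀‖ := by
          have := norm_add_le (R uP uP₀) (R uP uR₀ - R uP uP₀)
          simpa using this
      _ ≤ ‖R uP uP₀‖ + c₂ * ‖uR₀ - uP₀‖ := by gcongr; exact hic _ _ _
  -- projection is nonexpansive
  have hproj : ‖uR₀ - uP₀‖ ≤ ‖uR₀ - u₀‖ := by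
    have hself : (W.orthogonalProjection uR₀ : EuclideanSpace ℝ (Fin N)) = uR₀ := by
      exact Submodule.starProjection_eq_self_iff.2 huR₀
    have h1 : uR₀ - uP₀ = ((W.orthogonalProjection (uR₀ - u₀)) : EuclideanSpace ℝ (Fin N)) := by
      rw [map_sub, huP₀, Submodule.coe_sub, hself]
    rw [h1]
    calc ‖((W.orthogonalProjection (uR₀ - u₀)) : EuclideanSpace ℝ (Fin N))‖
        = ‖W.orthogonalProjection (uR₀ - u₀)‖ := rfl
      _ ≤ 1 * ‖uR₀ - u₀‖ :=
          (W.orthogonalProjection).le_of_opNorm_le (Submodule.orthogonalProjectionOnto_norm_le W) _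
      _ = ‖uR₀ - u₀‖ := one_mul _
  have hfinal : c₁ * ‖uR - u‖ ≤ ‖R uP uP₀‖ + 2 * c₂ * ‖uR₀ - u₀‖ := by
    have := key.trans (by gcongr : ‖R uR uR₀‖ + c₂ * ‖uR₀ - u₀‖ ≤ ‖R uP uR₀‖ + c₂ * ‖uR₀ - u₀‖)
    nlinarith [hic uP uR₀ uP₀, hsplit, hproj, hc₂nn]
  rw [div_mul_eq_mul_div, div_mul_eq_mul_div, ← add_div, le_div_iff₀ hc₁pos]
  nlinarith [hfinal]
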